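/- Let k ≥ 1 and let V_k ⊆ ℍ^{2k+1} be the real vector subspace of all vectors of the form (z₁, conj(z₁) + z₂·j, z₃ − conj(z₂)·j, …, conj(z_{2k−1}) + z_{2k}·j, −conj(z_{2k})·j), where z₁, …, z_{2k} are complex numbers. Then for every unit imaginary quaternion p, V_k^⊥ + p•(V_k^⊥) = ℍ^{2k+1}, where V_k^⊥ = {y ∈ ℍ^{2k+1} : Re(Σ x_i·conj(y_i)) = 0 for all x ∈ V_k}; that is, the dual of the pair (V_k, ℍ^{2k+1}) is given by a CR quaternionic vector space. -/

import Mathlib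

open Quaternion

/-- The quaternion unit `j`. -/
noncomputable def jq : Quaternion ℝ := ⟨0, 0, 1, 0⟩

/-- The contribution of the complex coordinate `z_s` to a vector of `V_k ⊆ ℍ^{2k+1}`
(`0`-based index `s`; `1`-based odd coordinates `z_{2m-1}` contribute
`z·ε_{2m-1} + conj z·ε_{2m}`, even coordinates `z_{2m}` contribute
`z·j·ε_{2m} - conj z·j·ε_{2m+1}`). -/
noncomputable def vContrib (k : ℕ) (s : Fin (2 * k)) (z : ℂ) :
    Fin (2 * k + 1) → Quaternion ℝ :=
  if (s : ℕ) % 2 = 0 then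
    Pi.single s.castSucc (z : ℍ[ℝ]) + Pi.single s.succ (((starRingEnd ℂ) z : ℂ) : ℍ[ℝ])
  else
    Pi.single s.castSucc ((z : ℍ[ℝ]) * jq) +
      Pi.single s.succ (-((((starRingEnd ℂ) z : ℂ) : ℍ[ℝ]) * jq))

/-- The model subspace `V_k ⊆ ℍ^{2k+1}`: all vectors
`(z₁, conj z₁ + z₂·j, z₃ − conj z₂·j, …, conj z_{2k−1} + z_{2k}·j, −conj z_{2k}·j)`
with `z₁, …, z_{2k}` complex. -/
noncomputable def VkSet (k : ℕ) : Set (Fin (2 * k + 1) → Quaternion ℝ) :=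
  {y | ∃ z : Fin (2 * k) → ℂ, y = ∑ s, vContrib k s (z s)}

/-- The orthogonal complement `V_k^⊥ ⊆ ℍ^{2k+1}` with respect to the real inner product
`(x, y) ↦ Re (Σ_i x_i · conj (y_i))`. -/
noncomputable def VkPerp (k : ℕ) : Set (Fin (2 * k + 1) → Quaternion ℝ) :=
  {y | ∀ x ∈ VkSet k, ∑ i, (x i * star (y i)).re = 0}

namespace CRAux

/-- ℂ-part of a quaternion (span of `1, i`). -/
noncomputable def Aq (q : ℍ[ℝ]) : ℂ := ⟨q.re, q.imI⟩
/-- j-part of a quaternion: `q = Aq q + (Bq q)·j`. -/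
noncomputable def Bq (q : ℍ[ℝ]) : ℂ := ⟨q.imJ, q.imK⟩
/-- Build a quaternion from its two complex parts. -/
noncomputable def Qc (a b : ℂ) : ℍ[ℝ] := ⟨a.re, a.im, b.re, b.im⟩

@[simp] lemma Aq_re (q : ℍ[ℝ]) : (Aq q).re = q.re := rfl
@[simp] lemma Aq_im (q : ℍ[ℝ]) : (Aq q).im = q.imI := rfl
@[simp] lemma Bq_re (q : ℍ[ℝ]) : (Bq q).re = q.imJ := rfl
@[simp] lemma Bq_im (q : ℍ[ℝ]) : (Bq q).im = q.imK := rfl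
@[simp] lemma Qc_re (a b : ℂ) : (Qc a b).re = a.re := rfl
@[simp] lemma Qc_imI (a b : ℂ) : (Qc a b).imI = a.im := rfl
@[simp] lemma Qc_imJ (a b : ℂ) : (Qc a b).imJ = b.re := rfl
@[simp] lemma Qc_imK (a b : ℂ) : (Qc a b).imK = b.im := rfl

@[simp] lemma Aq_Qc (a b : ℂ) : Aq (Qc a b) = a := by apply Complex.ext <;> simp
@[simp] lemma Bq_Qc (a b : ℂ) : Bq (Qc a b) = b := by apply Complex.ext <;> simp
@[simp] lemma Aq_sub (q r : ℍ[ℝ]) : Aq (q - r) = Aq q - Aq r := by apply Complex.ext <;> simp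
@[simp] lemma Bq_sub (q r : ℍ[ℝ]) : Bq (q - r) = Bq q - Bq r := by apply Complex.ext <;> simp

/-- ℂ-part of `-(Qc x y * q)`. -/
lemma Aq_neg_mul (x y : ℂ) (q : ℍ[ℝ]) :
    Aq (-(Qc x y * q)) = -(x * Aq q - y * (starRingEnd ℂ) (Bq q)) := by
  apply Complex.ext <;> simp [Quaternion.re_mul, Quaternion.imI_mul, Aq, Bq] <;> ring

/-- j-part of `-(Qc x y * q)`. -/
lemma Bq_neg_mul (x y : ℂ) (q : ℍ[ℝ]) :
    Bq (-(Qc x y * q)) = -(x * Bq q + y * (starRingEnd ℂ) (Aq q)) := by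
  apply Complex.ext <;> simp [Quaternion.imJ_mul, Quaternion.imK_mul, Aq, Bq] <;> ring

lemma re_sum {ι : Type*} (s : Finset ι) (f : ι → ℍ[ℝ]) :
    (∑ i ∈ s, f i).re = ∑ i ∈ s, (f i).re := by
  induction s using Finset.cons_induction <;> simp [*]

lemma re_Qc_mul_star (a b : ℂ) (q : ℍ[ℝ]) :
    (Qc a b * star q).re = a.re * q.re + a.im * q.imI + b.re * q.imJ + b.im * q.imK := by
  simp [Quaternion.re_mul]
  try ring

lemma coe_eq_Qc (z : ℂ) : (z : ℍ[ℝ]) = Qc z 0 := by ext <;> simp [Qc]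

lemma coe_mul_jq (z : ℂ) : (z : ℍ[ℝ]) * jq = Qc 0 z := by
  ext <;> simp [Quaternion.re_mul, Quaternion.imI_mul, Quaternion.imJ_mul,
    Quaternion.imK_mul, Qc] <;> simp [jq]

lemma sum_single {m : ℕ} (y : Fin m → ℍ[ℝ]) (t : Fin m) (q : ℍ[ℝ]) :
    ∑ i, ((Pi.single t q : Fin m → ℍ[ℝ]) i * star (y i)).re = (q * star (y t)).re := by
  rw [Finset.sum_eq_single t]
  · simp
  · intro b _ hb
    rw [Pi.single_eq_of_ne hb]
    simp
  · intro h
    exact absurd (Finset.mem_univ t) h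

/-- Sufficient condition for membership in `VkPerp`. -/
lemma mem_perp (k : ℕ) (y : Fin (2 * k + 1) → ℍ[ℝ])
    (h1 : ∀ s : Fin (2 * k), (s : ℕ) % 2 = 0 →
      Aq (y s.succ) = -(starRingEnd ℂ) (Aq (y s.castSucc)))
    (h2 : ∀ s : Fin (2 * k), (s : ℕ) % 2 = 1 →
      Bq (y s.succ) = (starRingEnd ℂ) (Bq (y s.castSucc))) :
    y ∈ VkPerp k := by
  intro x hx
  obtain ⟨z, rfl⟩ := hx
  have key : ∀ i, ((∑ s, vContrib k s (z s)) i * star (y i)).re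
      = ∑ s, (vContrib k s (z s) i * star (y i)).re := by
    intro i
    rw [Finset.sum_apply, Finset.sum_mul, re_sum]
  rw [Finset.sum_congr rfl fun i _ => key i, Finset.sum_comm]
  apply Finset.sum_eq_zero
  intro s _
  rcases Nat.mod_two_eq_zero_or_one (s : ℕ) with hs | hs
  · rw [vContrib, if_pos hs]
    simp only [Pi.add_apply, add_mul, Quaternion.re_add, Finset.sum_add_distrib,
      sum_single]
    have hre : (y s.succ).re = -(y s.castSucc).re := by
      simpa using congrArg Complex.re (h1 s hs)
    have him : (y s.succ).imI = (y s.castSucc).imI := by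
      simpa using congrArg Complex.im (h1 s hs)
    rw [coe_eq_Qc (z s), coe_eq_Qc ((starRingEnd ℂ) (z s)), re_Qc_mul_star,
      re_Qc_mul_star, hre, him]
    simp
    ring
  · rw [vContrib, if_neg (by omega)]
    simp only [Pi.add_apply, add_mul, Quaternion.re_add, Finset.sum_add_distrib,
      sum_single]
    have hJ : (y s.succ).imJ = (y s.castSucc).imJ := by
      simpa using congrArg Complex.re (h2 s hs)
    have hK : (y s.succ).imK = -(y s.castSucc).imK := by
      simpa using congrArg Complex.im (h2 s hs)
    rw [coe_mul_jq, coe_mul_jq, neg_mul, Quaternion.re_neg, re_Qc_mul_star,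
      re_Qc_mul_star, hJ, hK]
    simp

/-- Recursive construction of `u` in the case `y ≠ 0`. -/
noncomputable def buildU (x y : ℂ) (W : ℕ → ℍ[ℝ]) : ℕ → ℍ[ℝ]
  | 0 => 0
  | n + 1 =>
    if n % 2 = 0 then
      Qc (-(starRingEnd ℂ) (Aq (buildU x y W n)))
        (Bq (W (n + 1)) -
          (starRingEnd ℂ)
            ((-(starRingEnd ℂ) (Aq (-(Qc x y * (W n - buildU x y W n)))) +
                x * (Aq (W (n + 1)) + (starRingEnd ℂ) (Aq (buildU x y W n)))) / y))
    else
      Qc (Aq (W (n + 1)) +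
          (starRingEnd ℂ)
            (((starRingEnd ℂ) (Bq (-(Qc x y * (W n - buildU x y W n)))) +
                x * (Bq (W (n + 1)) - (starRingEnd ℂ) (Bq (buildU x y W n)))) / y))
        ((starRingEnd ℂ) (Bq (buildU x y W n)))

lemma buildU_even (x y : ℂ) (W : ℕ → ℍ[ℝ]) {n : ℕ} (hn : n % 2 = 0) :
    buildU x y W (n + 1) =
      Qc (-(starRingEnd ℂ) (Aq (buildU x y W n)))
        (Bq (W (n + 1)) -
          (starRingEnd ℂ)
            ((-(starRingEnd ℂ) (Aq (-(Qc x y * (W n - buildU x y W n)))) +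
                x * (Aq (W (n + 1)) + (starRingEnd ℂ) (Aq (buildU x y W n)))) / y)) := by
  rw [buildU, if_pos hn]

lemma buildU_odd (x y : ℂ) (W : ℕ → ℍ[ℝ]) {n : ℕ} (hn : n % 2 = 1) :
    buildU x y W (n + 1) =
      Qc (Aq (W (n + 1)) +
          (starRingEnd ℂ)
            (((starRingEnd ℂ) (Bq (-(Qc x y * (W n - buildU x y W n)))) +
                x * (Bq (W (n + 1)) - (starRingEnd ℂ) (Bq (buildU x y W n)))) / y))
        ((starRingEnd ℂ) (Bq (buildU x y W n))) := by
  rw [buildU, if_neg (by omega)]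

lemma buildU_Ua (x y : ℂ) (W : ℕ → ℍ[ℝ]) {n : ℕ} (hn : n % 2 = 0) :
    Aq (buildU x y W (n + 1)) = -(starRingEnd ℂ) (Aq (buildU x y W n)) := by
  rw [buildU_even x y W hn, Aq_Qc]

lemma buildU_Ub (x y : ℂ) (W : ℕ → ℍ[ℝ]) {n : ℕ} (hn : n % 2 = 1) :
    Bq (buildU x y W (n + 1)) = (starRingEnd ℂ) (Bq (buildU x y W n)) := by
  rw [buildU_odd x y W hn, Bq_Qc]

lemma buildU_Va (x y : ℂ) (W : ℕ → ℍ[ℝ]) (hy : y ≠ 0) {n : ℕ} (hn : n % 2 = 0) :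
    Aq (-(Qc x y * (W (n + 1) - buildU x y W (n + 1)))) =
      -(starRingEnd ℂ) (Aq (-(Qc x y * (W n - buildU x y W n)))) := by
  rw [Aq_neg_mul x y (W (n + 1) - buildU x y W (n + 1)), buildU_even x y W hn]
  simp only [Aq_sub, Bq_sub, Aq_Qc, Bq_Qc, sub_sub_cancel, Complex.conj_conj,
    sub_neg_eq_add]
  rw [mul_comm y, div_mul_cancel₀ _ hy]
  ring

lemma buildU_Vb (x y : ℂ) (W : ℕ → ℍ[ℝ]) (hy : y ≠ 0) {n : ℕ} (hn : n % 2 = 1) :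
    Bq (-(Qc x y * (W (n + 1) - buildU x y W (n + 1)))) =
      (starRingEnd ℂ) (Bq (-(Qc x y * (W n - buildU x y W n)))) := by
  rw [Bq_neg_mul x y (W (n + 1) - buildU x y W (n + 1)), buildU_odd x y W hn]
  simp only [Aq_sub, Bq_sub, Aq_Qc, Bq_Qc, sub_add_cancel_left, map_neg,
    Complex.conj_conj]
  field_simp
  ring

/-- Explicit construction of `u` in the case `y = 0` (`p = ±i`). -/
noncomputable def uZero (k : ℕ) (W : ℕ → ℍ[ℝ]) (n : ℕ) : ℍ[ℝ] :=
  Qc (if n % 2 = 0 then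
        (if n = 2 * k then 0 else (Aq (W n) - (starRingEnd ℂ) (Aq (W (n + 1)))) / 2)
      else (Aq (W n) - (starRingEnd ℂ) (Aq (W (n - 1)))) / 2)
     (if n % 2 = 1 then (Bq (W n) + (starRingEnd ℂ) (Bq (W (n + 1)))) / 2
      else if n = 0 then 0 else (Bq (W n) + (starRingEnd ℂ) (Bq (W (n - 1)))) / 2)

lemma uZero_Ua (k : ℕ) (W : ℕ → ℍ[ℝ]) {n : ℕ} (hn : n % 2 = 0) (hlt : n < 2 * k) :
    Aq (uZero k W (n + 1)) = -(starRingEnd ℂ) (Aq (uZero k W n)) := by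
  simp only [uZero, Aq_Qc]
  rw [if_neg (by omega), if_pos hn, if_neg (by omega), Nat.add_sub_cancel]
  simp only [map_sub, map_div₀, map_ofNat, Complex.conj_conj]
  ring

lemma uZero_Ub (k : ℕ) (W : ℕ → ℍ[ℝ]) {n : ℕ} (hn : n % 2 = 1) :
    Bq (uZero k W (n + 1)) = (starRingEnd ℂ) (Bq (uZero k W n)) := by
  simp only [uZero, Bq_Qc]
  rw [if_neg (by omega), if_neg (by omega), if_pos hn, Nat.add_sub_cancel]
  simp only [map_add, map_div₀, map_ofNat, Complex.conj_conj]
  ring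

lemma uZero_Va (k : ℕ) (W : ℕ → ℍ[ℝ]) {x : ℂ} (hx : (starRingEnd ℂ) x = -x)
    {n : ℕ} (hn : n % 2 = 0) (hlt : n < 2 * k) :
    Aq (-(Qc x 0 * (W (n + 1) - uZero k W (n + 1)))) =
      -(starRingEnd ℂ) (Aq (-(Qc x 0 * (W n - uZero k W n)))) := by
  rw [Aq_neg_mul, Aq_neg_mul]
  simp only [zero_mul, sub_zero, Aq_sub]
  simp only [uZero, Aq_Qc]
  rw [if_neg (show ¬((n+1) % 2 = 0) by omega), if_pos hn, if_neg (by omega),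
    Nat.add_sub_cancel]
  simp only [map_neg, map_mul, map_sub, map_div₀, map_ofNat, Complex.conj_conj, hx]
  ring

lemma uZero_Vb (k : ℕ) (W : ℕ → ℍ[ℝ]) {x : ℂ} (hx : (starRingEnd ℂ) x = -x)
    {n : ℕ} (hn : n % 2 = 1) :
    Bq (-(Qc x 0 * (W (n + 1) - uZero k W (n + 1)))) =
      (starRingEnd ℂ) (Bq (-(Qc x 0 * (W n - uZero k W n)))) := by
  rw [Bq_neg_mul, Bq_neg_mul]
  simp only [zero_mul, add_zero, Bq_sub]
  simp only [uZero, Bq_Qc]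
  rw [if_neg (show ¬((n+1) % 2 = 1) by omega), if_neg (by omega), if_pos hn,
    Nat.add_sub_cancel]
  simp only [map_neg, map_mul, map_add, map_sub, map_div₀, map_ofNat,
    Complex.conj_conj, hx]
  ring

/-- Packaging: if `u ∈ V_k^⊥` and `-(p·(w-u)) ∈ V_k^⊥`, we get the decomposition. -/
lemma assemble {k : ℕ} {p : ℍ[ℝ]} (hp : p ^ 2 = -1) (w u : Fin (2 * k + 1) → ℍ[ℝ])
    (hu : u ∈ VkPerp k) (hv : (fun i => -(p * (w i - u i))) ∈ VkPerp k) :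
    ∃ u' v, u' ∈ VkPerp k ∧ v ∈ VkPerp k ∧ w = u' + fun i => p * v i := by
  refine ⟨u, fun i => -(p * (w i - u i)), hu, hv, ?_⟩
  funext i
  have h : p * -(p * (w i - u i)) = w i - u i := by
    rw [mul_neg, ← mul_assoc, ← pow_two, hp, neg_one_mul, neg_neg]
  simp only [Pi.add_apply]
  rw [h]
  abel

end CRAux

open CRAux in
/-- For `k ≥ 1` and every unit imaginary quaternion `p`,
`V_k^⊥ + p•(V_k^⊥) = ℍ^{2k+1}`; that is, the dual of the pair `(V_k, ℍ^{2k+1})` is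
given by a CR quaternionic vector space. -/
theorem stmt15 (k : ℕ) (hk : 1 ≤ k) (p : Quaternion ℝ) (hp : p ^ 2 = -1) :
    ∀ w : Fin (2 * k + 1) → Quaternion ℝ,
      ∃ u v, u ∈ VkPerp k ∧ v ∈ VkPerp k ∧ w = u + fun i => p * v i := by
  intro w
  have hpp : p * p = -1 := by rw [← pow_two]; exact hp
  have e1 : p.re * p.re - p.imI * p.imI - p.imJ * p.imJ - p.imK * p.imK = -1 := by
    have h := congrArg QuaternionAlgebra.re hpp
    simp only [Quaternion.re_mul, Quaternion.re_neg, Quaternion.re_one] at h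
    linear_combination h
  have e2 : p.re * p.imI = 0 := by
    have h := congrArg QuaternionAlgebra.imI hpp
    simp only [Quaternion.imI_mul, Quaternion.imI_neg, Quaternion.imI_one, neg_zero] at h
    linear_combination h / 2
  have e3 : p.re * p.imJ = 0 := by
    have h := congrArg QuaternionAlgebra.imJ hpp
    simp only [Quaternion.imJ_mul, Quaternion.imJ_neg, Quaternion.imJ_one, neg_zero] at h
    linear_combination h / 2
  have e4 : p.re * p.imK = 0 := by
    have h := congrArg QuaternionAlgebra.imK hpp
    simp only [Quaternion.imK_mul, Quaternion.imK_neg, Quaternion.imK_one, neg_zero] at h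
    linear_combination h / 2
  have hre : p.re = 0 := by
    by_contra h
    have hI : p.imI = 0 := by
      rcases mul_eq_zero.mp e2 with h' | h'
      · exact absurd h' h
      · exact h'
    have hJ : p.imJ = 0 := by
      rcases mul_eq_zero.mp e3 with h' | h'
      · exact absurd h' h
      · exact h'
    have hK : p.imK = 0 := by
      rcases mul_eq_zero.mp e4 with h' | h'
      · exact absurd h' h
      · exact h'
    rw [hI, hJ, hK] at e1
    nlinarith [sq_nonneg p.re]
  set W : ℕ → ℍ[ℝ] := fun n => if h : n < 2 * k + 1 then w ⟨n, h⟩ else 0 with hWdef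
  have hw : ∀ i : Fin (2 * k + 1), w i = W (i : ℕ) := by
    intro i
    simp [hWdef, i.isLt]
    exact fun h => absurd i.isLt (by omega)
  set x : ℂ := ⟨0, p.imI⟩ with hxdef
  set y : ℂ := ⟨p.imJ, p.imK⟩ with hydef
  have hxre : x.re = 0 := rfl
  have hxim : x.im = p.imI := rfl
  have hyre : y.re = p.imJ := rfl
  have hyim : y.im = p.imK := rfl
  have hpQ : p = Qc x y := by
    ext
    · rw [Qc_re, hxre, hre]
    · rw [Qc_imI, hxim]
    · rw [Qc_imJ, hyre]
    · rw [Qc_imK, hyim]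
  have hx : (starRingEnd ℂ) x = -x := by
    apply Complex.ext
    · rw [Complex.conj_re, Complex.neg_re, hxre, neg_zero]
    · rw [Complex.conj_im, Complex.neg_im]
  by_cases hy : y = 0
  · -- p = ±i
    have hpQ0 : p = Qc x 0 := by rw [hpQ, hy]
    refine assemble hp w (fun i => uZero k W (i : ℕ)) (mem_perp _ _ ?_ ?_) (mem_perp _ _ ?_ ?_)
    · intro s hs
      simp only [Fin.val_succ, Fin.coe_castSucc]
      exact uZero_Ua k W hs s.isLt
    · intro s hs
      simp only [Fin.val_succ, Fin.coe_castSucc]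
      exact uZero_Ub k W hs
    · intro s hs
      simp only [Fin.val_succ, Fin.coe_castSucc, hw s.succ, hw s.castSucc, hpQ0]
      exact uZero_Va k W hx hs s.isLt
    · intro s hs
      simp only [Fin.val_succ, Fin.coe_castSucc, hw s.succ, hw s.castSucc, hpQ0]
      exact uZero_Vb k W hx hs
  · refine assemble hp w (fun i => buildU x y W (i : ℕ))
      (mem_perp _ _ ?_ ?_) (mem_perp _ _ ?_ ?_)
    · intro s hs
      simp only [Fin.val_succ, Fin.coe_castSucc]
      exact buildU_Ua x y W hs
    · intro s hs
      simp only [Fin.val_succ, Fin.coe_castSucc]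
      exact buildU_Ub x y W hs
    · intro s hs
      simp only [Fin.val_succ, Fin.coe_castSucc, hw s.succ, hw s.castSucc, hpQ]
      exact buildU_Va x y W hy hs
    · intro s hs
      simp only [Fin.val_succ, Fin.coe_castSucc, hw s.succ, hw s.castSucc, hpQ]
      exact buildU_Vb x y W hy hs
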